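/- Let P ∈ ℂ[x,y] be a commode quasi-homogeneous polynomial with coprime weights (p,q), which is monic as a polynomial in y. Then there exist k ∈ ℕ and λ₁,…,λ_k ∈ ℂ* such that P(x,y) = ∏_{ℓ=1}^k (y^p − λ_ℓ x^q), and this factorization is unique up to permutation of the λ_ℓ. -/

import Mathlib

open MvPolynomial

private noncomputable def Ee (p q k t : ℕ) : Fin 2 →₀ ℕ :=
  Finsupp.single 0 (q * t) + Finsupp.single 1 (p * (k - t))

private lemma Ee_apply0 (p q k t : ℕ) : Ee p q k t 0 = q * t := by
  simp [Ee, Finsupp.single_apply]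

private lemma Ee_apply1 (p q k t : ℕ) : Ee p q k t 1 = p * (k - t) := by
  simp [Ee, Finsupp.single_apply]

private lemma fin2_eq_single_add (e : Fin 2 →₀ ℕ) :
    e = Finsupp.single 0 (e 0) + Finsupp.single 1 (e 1) := by
  ext i
  fin_cases i <;> simp [Finsupp.single_apply]

private lemma Ee_inj (p q k : ℕ) (hq : 0 < q) {t t' : ℕ}
    (h : Ee p q k t = Ee p q k t') : t = t' := by
  have h0 := congrArg (fun f : Fin 2 →₀ ℕ => f 0) h
  simp only [Ee_apply0] at h0
  exact Nat.eq_of_mul_eq_mul_left hq h0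

private lemma monomial_Ee (p q k t : ℕ) (c : ℂ) :
    (monomial (Ee p q k t) c : MvPolynomial (Fin 2) ℂ)
      = C c * X 0 ^ (q * t) * X 1 ^ (p * (k - t)) := by
  rw [Ee, C_mul_X_pow_eq_monomial, X_pow_eq_monomial, monomial_mul, mul_one]

private lemma shape_sum (p q k : ℕ) (hq : 0 < q) (A : MvPolynomial (Fin 2) ℂ)
    (h : ∀ e ∈ A.support, ∃ t ≤ k, e = Ee p q k t) :
    A = ∑ t ∈ Finset.range (k + 1), monomial (Ee p q k t) (coeff (Ee p q k t) A) := by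
  classical
  have hinj : ∀ t ∈ Finset.range (k+1), ∀ t' ∈ Finset.range (k+1),
      Ee p q k t = Ee p q k t' → t = t' := fun t _ t' _ ht => Ee_inj p q k hq ht
  have hsub : A.support ⊆ (Finset.range (k+1)).image (Ee p q k) := by
    intro e he
    obtain ⟨t, ht, rfl⟩ := h e he
    exact Finset.mem_image.2 ⟨t, Finset.mem_range.2 (Nat.lt_succ_of_le ht), rfl⟩
  calc A = ∑ v ∈ A.support, monomial v (coeff v A) := (A.as_sum)
    _ = ∑ v ∈ (Finset.range (k+1)).image (Ee p q k), monomial v (coeff v A) := by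
        refine Finset.sum_subset hsub ?_
        intro v _ hv
        rw [notMem_support_iff.1 hv, map_zero]
    _ = ∑ t ∈ Finset.range (k+1), monomial (Ee p q k t) (coeff (Ee p q k t) A) :=
        Finset.sum_image hinj

private noncomputable def ev : MvPolynomial (Fin 2) ℂ →ₐ[ℂ] Polynomial ℂ :=
  aeval ![1, Polynomial.X]

private lemma ev_factor (p q : ℕ) (c : ℂ) :
    ev (X 1 ^ p - C c * X 0 ^ q) = Polynomial.X ^ p - Polynomial.C c := by
  simp [ev, Polynomial.algebraMap_eq]

private lemma ev_CXX (a b : ℕ) (c : ℂ) :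
    ev (C c * X 0 ^ a * X 1 ^ b : MvPolynomial (Fin 2) ℂ)
      = Polynomial.C c * Polynomial.X ^ b := by
  simp [ev, Polynomial.algebraMap_eq]

private lemma ev_coeff_shape (p q k : ℕ) (hp : 0 < p) (hq : 0 < q)
    (A : MvPolynomial (Fin 2) ℂ)
    (h : ∀ e ∈ A.support, ∃ t ≤ k, e = Ee p q k t) (t0 : ℕ) (ht0 : t0 ≤ k) :
    (ev A).coeff (p * (k - t0)) = coeff (Ee p q k t0) A := by
  conv_lhs => rw [shape_sum p q k hq A h]
  rw [map_sum, Polynomial.finset_sum_coeff]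
  rw [Finset.sum_eq_single t0]
  · rw [monomial_Ee, ev_CXX, Polynomial.coeff_C_mul, Polynomial.coeff_X_pow, if_pos rfl, mul_one]
  · intro t ht hne
    have htk : t ≤ k := Nat.lt_succ_iff.1 (Finset.mem_range.1 ht)
    rw [monomial_Ee, ev_CXX, Polynomial.coeff_C_mul, Polynomial.coeff_X_pow, if_neg, mul_zero]
    intro hEq
    have h2 : k - t0 = k - t := Nat.eq_of_mul_eq_mul_left hp hEq
    exact hne (by omega)
  · intro h0
    exact absurd (Finset.mem_range.2 (Nat.lt_succ_of_le ht0)) h0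

private lemma ev_inj (p q k : ℕ) (hp : 0 < p) (hq : 0 < q) (A B : MvPolynomial (Fin 2) ℂ)
    (hA : ∀ e ∈ A.support, ∃ t ≤ k, e = Ee p q k t)
    (hB : ∀ e ∈ B.support, ∃ t ≤ k, e = Ee p q k t)
    (h : ev A = ev B) : A = B := by
  rw [shape_sum p q k hq A hA, shape_sum p q k hq B hB]
  refine Finset.sum_congr rfl fun t ht => ?_
  have htk : t ≤ k := Nat.lt_succ_iff.1 (Finset.mem_range.1 ht)
  rw [← ev_coeff_shape p q k hp hq A hA t htk, ← ev_coeff_shape p q k hp hq B hB t htk, h]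

private lemma prod_shape (p q : ℕ) :
    ∀ (n : ℕ) (l : Fin n → ℂ) (e : Fin 2 →₀ ℕ),
      e ∈ (∏ i, (X 1 ^ p - C (l i) * X 0 ^ q) : MvPolynomial (Fin 2) ℂ).support →
      ∃ t ≤ n, e = Ee p q n t := by
  classical
  have hfac : ∀ (c : ℂ), (X 1 ^ p - C c * X 0 ^ q : MvPolynomial (Fin 2) ℂ).support ⊆
      {Finsupp.single 1 p, Finsupp.single 0 q} := by
    intro c
    refine (MvPolynomial.support_sub _ _ _).trans ?_
    intro e he
    rcases Finset.mem_union.1 he with h | h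
    · rw [MvPolynomial.support_X_pow] at h
      simp only [Finset.mem_singleton] at h
      simp [h]
    · rw [C_mul_X_pow_eq_monomial, support_monomial] at h
      split_ifs at h
      · exact absurd h (Finset.notMem_empty e)
      · simp only [Finset.mem_singleton] at h
        simp [h]
  intro n
  induction n with
  | zero =>
    intro l e he
    simp only [Finset.univ_eq_empty, Finset.prod_empty] at he
    simp only [MvPolynomial.mem_support_iff, MvPolynomial.coeff_one, ne_eq, ite_eq_right_iff,
      one_ne_zero, imp_false, not_not] at he
    exact ⟨0, le_refl 0, by simp [Ee, he]⟩
  | succ n ih =>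
    intro l e he
    rw [Fin.prod_univ_castSucc] at he
    have hmem := MvPolynomial.support_mul _ _ he
    rw [Finset.mem_add] at hmem
    obtain ⟨e1, h1, e2, h2, rfl⟩ := hmem
    obtain ⟨t, ht, rfl⟩ := ih (fun i => l i.castSucc) e1 h1
    rcases Finset.mem_insert.1 (hfac _ h2) with h | h
    · refine ⟨t, le_trans ht (Nat.le_succ n), ?_⟩
      have h1 : p * ((n + 1) - t) = p * (n - t) + p := by
        rw [Nat.succ_sub ht, Nat.mul_succ]
      rw [h]
      simp only [Ee, h1, Finsupp.single_add, add_assoc]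
    · simp only [Finset.mem_singleton] at h
      refine ⟨t + 1, Nat.succ_le_succ ht, ?_⟩
      have h1 : q * (t + 1) = q * t + q := Nat.mul_succ q t
      have h2' : (n + 1) - (t + 1) = n - t := Nat.succ_sub_succ n t
      rw [h]
      simp only [Ee, h1, h2', Finsupp.single_add]
      abel

private lemma perm_get_equiv {α : Type*} {l1 l2 : List α} (h : l1.Perm l2) :
    ∃ σ : Fin l2.length ≃ Fin l1.length, ∀ i, l1.get (σ i) = l2.get i := by
  induction h with
  | nil => exact ⟨Equiv.refl _, fun i => i.elim0⟩
  | cons x h ih =>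
    obtain ⟨σ, hσ⟩ := ih
    refine ⟨(finSuccEquiv _).trans ((Equiv.optionCongr σ).trans (finSuccEquiv _).symm),
      fun i => ?_⟩
    refine Fin.cases ?_ (fun j => ?_) i
    · simp
    · simpa using hσ j
  | swap x y l =>
    refine ⟨show Fin (l.length + 2) ≃ Fin (l.length + 2) from Equiv.swap 0 1, fun i => ?_⟩
    refine Fin.cases rfl (fun j => Fin.cases rfl (fun j' => rfl) j) i
  | trans h1 h2 ih1 ih2 =>
    obtain ⟨σ1, hσ1⟩ := ih1
    obtain ⟨σ2, hσ2⟩ := ih2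
    exact ⟨σ2.trans σ1, fun i => by rw [Equiv.trans_apply, hσ1, hσ2]⟩

private lemma ofFn_perm_equiv {α : Type*} {n m : ℕ} {f : Fin n → α} {g : Fin m → α}
    (h : (List.ofFn f).Perm (List.ofFn g)) : ∃ σ : Fin m ≃ Fin n, ∀ i, f (σ i) = g i := by
  obtain ⟨σ, hσ⟩ := perm_get_equiv h
  refine ⟨(finCongr (List.length_ofFn (f := g)).symm).trans
    (σ.trans (finCongr (List.length_ofFn (f := f)))), fun i => ?_⟩
  have := hσ (finCongr (List.length_ofFn (f := g)).symm i)
  simp [List.get_ofFn] at this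
  exact this

private lemma ofFn_get_cast {α : Type*} (L : List α) {k : ℕ} (h : L.length = k) :
    List.ofFn (fun i : Fin k => L.get (Fin.cast h.symm i)) = L := by
  subst h
  exact List.ofFn_get L

private lemma theta_inj (p : ℕ) (hp : 0 < p) {f g : Polynomial ℂ}
    (h : Polynomial.aeval (Polynomial.X ^ p : Polynomial ℂ) f
       = Polynomial.aeval (Polynomial.X ^ p : Polynomial ℂ) g) : f = g := by
  have h2 : (f - g).comp (Polynomial.X ^ p) = 0 := by
    rw [Polynomial.sub_comp, Polynomial.comp_eq_aeval, Polynomial.comp_eq_aeval, h, sub_self]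
  rcases Polynomial.comp_eq_zero_iff.1 h2 with h3 | ⟨_, h4⟩
  · exact sub_eq_zero.1 h3
  · exfalso
    have hd := congrArg Polynomial.natDegree h4
    rw [Polynomial.natDegree_X_pow, Polynomial.natDegree_C] at hd
    omega

/-- A commode quasi-homogeneous polynomial with coprime weights `(p,q)`,
monic in `y`, factors as `∏_{ℓ=1}^k (y^p − λ_ℓ x^q)` with `λ_ℓ ∈ ℂ*`, uniquely up to
permutation of the `λ_ℓ`. -/
theorem commode_quasiHomogeneous_monic_factorization
    (p q m : ℕ) (hp : 0 < p) (hq : 0 < q) (hpq : Nat.Coprime p q)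
    (P : MvPolynomial (Fin 2) ℂ) (hP : P ≠ 0)
    (hqh : ∀ e ∈ P.support, p * e 0 + q * e 1 = m)
    (hcx : ¬ X 0 ∣ P) (hcy : ¬ X 1 ∣ P)
    (hmonic : MvPolynomial.coeff (Finsupp.single 1 (P.degreeOf 1)) P = 1) :
    ∃ (k : ℕ) (l : Fin k → ℂ), (∀ i, l i ≠ 0) ∧
      P = ∏ i, (X 1 ^ p - C (l i) * X 0 ^ q) ∧
      ∀ (k' : ℕ) (l' : Fin k' → ℂ), (∀ i, l' i ≠ 0) →
        P = ∏ i, (X 1 ^ p - C (l' i) * X 0 ^ q) →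
        ∃ σ : Fin k' ≃ Fin k, ∀ i, l (σ i) = l' i := by
  classical
  -- there are exponents avoiding each variable
  have hex : ∀ i : Fin 2, ¬ X i ∣ P → ∃ e ∈ P.support, e i = 0 := by
    intro i hdvd
    by_contra hcon
    push_neg at hcon
    apply hdvd
    rw [P.as_sum]
    refine Finset.dvd_sum fun v hv => ?_
    rw [X_dvd_monomial]
    exact Or.inr (hcon v hv)
  obtain ⟨ex, hexs, hex0⟩ := hex 0 hcx
  obtain ⟨ey, heys, hey0⟩ := hex 1 hcy
  have hqm : q ∣ m := by
    have h1 := hqh ex hexs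
    rw [hex0, mul_zero, zero_add] at h1
    exact ⟨ex 1, h1.symm⟩
  have hpm : p ∣ m := by
    have h1 := hqh ey heys
    rw [hey0, mul_zero, add_zero] at h1
    exact ⟨ey 0, h1.symm⟩
  obtain ⟨k, hm⟩ := Nat.Coprime.mul_dvd_of_dvd_of_dvd hpq hpm hqm
  -- shape of the support of P
  have hshape : ∀ e ∈ P.support, ∃ t ≤ k, e = Ee p q k t := by
    intro e he
    have hsum := hqh e he
    have hq0' : q ∣ p * e 0 := by
      have hA : q ∣ p * e 0 + q * e 1 := by
        rw [hsum, hm]; exact ⟨p * k, by ring⟩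
      have hB : q ∣ q * e 1 := Dvd.intro _ rfl
      have := Nat.dvd_sub hA hB
      rwa [Nat.add_sub_cancel] at this
    have hp1' : p ∣ q * e 1 := by
      have hA : p ∣ p * e 0 + q * e 1 := by
        rw [hsum, hm]; exact ⟨q * k, by ring⟩
      have hB : p ∣ p * e 0 := Dvd.intro _ rfl
      have := Nat.dvd_sub hA hB
      rwa [Nat.add_sub_cancel_left] at this
    obtain ⟨t, htv⟩ := (Nat.Coprime.dvd_of_dvd_mul_left hpq.symm hq0')
    obtain ⟨s, hsv⟩ := (Nat.Coprime.dvd_of_dvd_mul_left hpq hp1')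
    have hts : p * q * (t + s) = p * q * k := by
      calc p * q * (t + s) = p * (q * t) + q * (p * s) := by ring
        _ = p * e 0 + q * e 1 := by rw [htv, hsv]
        _ = p * q * k := by rw [hsum, hm]
    have hts' : t + s = k := Nat.eq_of_mul_eq_mul_left (Nat.mul_pos hp hq) hts
    refine ⟨t, by omega, ?_⟩
    have hks : k - t = s := by omega
    rw [fin2_eq_single_add e, htv, hsv, Ee, hks]
  -- degree of P in y
  have hdeg : P.degreeOf 1 = p * k := by
    rw [degreeOf_eq_sup]
    apply le_antisymm
    · apply Finset.sup_le
      intro e he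
      obtain ⟨t, ht, rfl⟩ := hshape e he
      rw [Ee_apply1]
      exact Nat.mul_le_mul_left p (Nat.sub_le k t)
    · obtain ⟨t, ht, htE⟩ := hshape ex hexs
      have h0 : q * t = 0 := by
        rw [← Ee_apply0 p q k t, ← htE, hex0]
      have ht0 : t = 0 := by
        rcases Nat.mul_eq_zero.1 h0 with h | h
        · omega
        · exact h
      have hx1 : ex 1 = p * k := by
        rw [htE, Ee_apply1, ht0, Nat.sub_zero]
      calc p * k = ex 1 := hx1.symm
        _ ≤ P.support.sup fun e => e 1 := Finset.le_sup (f := fun e : Fin 2 →₀ ℕ => e 1) hexs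
  set a : ℕ → ℂ := fun t => coeff (Ee p q k t) P with ha
  have ha0 : a 0 = 1 := by
    have hE0 : Ee p q k 0 = Finsupp.single 1 (p * k) := by
      simp [Ee]
    rw [ha]
    simp only []
    rw [hE0, ← hdeg]
    exact hmonic
  have hak : a k ≠ 0 := by
    obtain ⟨t, ht, htE⟩ := hshape ey heys
    have h1 : p * (k - t) = 0 := by
      rw [← Ee_apply1 p q k t, ← htE, hey0]
    have htk : t = k := by
      rcases Nat.mul_eq_zero.1 h1 with h | h
      · omega
      · omega
    rw [ha]
    simp only []
    rw [htk] at htE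
    rw [← htE]
    exact mem_support_iff.1 heys
  -- the one-variable polynomial g
  set g : Polynomial ℂ := ∑ s ∈ Finset.range (k + 1),
      Polynomial.C (a (k - s)) * Polynomial.X ^ s with hg
  have hgcoeff : g.coeff k = 1 := by
    rw [hg, Polynomial.finset_sum_coeff]
    rw [Finset.sum_eq_single k]
    · rw [Polynomial.coeff_C_mul, Polynomial.coeff_X_pow, if_pos rfl, mul_one, Nat.sub_self, ha0]
    · intro s hs hne
      rw [Polynomial.coeff_C_mul, Polynomial.coeff_X_pow, if_neg (fun h => hne h.symm), mul_zero]
    · intro h0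
      exact absurd (Finset.self_mem_range_succ k) h0
  have hdegle : g.natDegree ≤ k := by
    rw [hg]
    refine Polynomial.natDegree_sum_le_of_forall_le _ _ fun s hs => ?_
    exact le_trans (Polynomial.natDegree_C_mul_X_pow_le _ _)
      (Nat.lt_succ_iff.1 (Finset.mem_range.1 hs))
  have hmg : g.Monic := Polynomial.monic_of_natDegree_le_of_coeff_eq_one k hdegle hgcoeff
  have hnd : g.natDegree = k :=
    le_antisymm hdegle (Polynomial.le_natDegree_of_ne_zero (by rw [hgcoeff]; exact one_ne_zero))
  have hsplits : Polynomial.Splits g := IsAlgClosed.splits g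
  have hcard : g.roots.card = k := by
    rw [← hnd]
    exact (Polynomial.splits_iff_card_roots).1 hsplits
  have hgprod : g = (g.roots.map fun r => Polynomial.X - Polynomial.C r).prod :=
    hsplits.eq_prod_roots_of_monic hmg
  have heval0 : g.eval 0 = a k := by
    rw [hg, Polynomial.eval_finset_sum]
    rw [Finset.sum_eq_single 0]
    · simp
    · intro s hs hne
      simp [zero_pow hne]
    · intro h0
      exact absurd (Finset.mem_range.2 (Nat.succ_pos k)) h0
  have hroots_ne : ∀ r ∈ g.roots, r ≠ 0 := by
    intro r hr h0
    subst h0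
    have h1 := Polynomial.isRoot_of_mem_roots hr
    rw [Polynomial.IsRoot, heval0] at h1
    exact hak h1
  -- enumerate roots
  set L := g.roots.toList with hL
  have hlen : L.length = k := by rw [hL, Multiset.length_toList, hcard]
  set l : Fin k → ℂ := fun i => L.get (Fin.cast hlen.symm i) with hl
  have hofFn : List.ofFn l = L := ofFn_get_cast L hlen
  have hμ : (Finset.univ.val.map l) = g.roots := by
    rw [Fin.univ_val_map, hofFn, hL, Multiset.coe_toList]
  have hlne : ∀ i, l i ≠ 0 := by
    intro i
    apply hroots_ne
    rw [← hμ]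
    exact Multiset.mem_map_of_mem l (Finset.mem_univ i)
  -- Θ := substitution X ↦ X^p
  set Θ : Polynomial ℂ →ₐ[ℂ] Polynomial ℂ :=
    Polynomial.aeval (Polynomial.X ^ p : Polynomial ℂ) with hΘ
  have hΘg : Θ g = ∑ t ∈ Finset.range (k + 1),
      Polynomial.C (a t) * Polynomial.X ^ (p * (k - t)) := by
    rw [hg, map_sum]
    calc ∑ s ∈ Finset.range (k+1), Θ (Polynomial.C (a (k - s)) * Polynomial.X ^ s)
        = ∑ s ∈ Finset.range (k+1), Polynomial.C (a (k - s)) * Polynomial.X ^ (p * s) := by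
          refine Finset.sum_congr rfl fun s hs => ?_
          rw [map_mul, map_pow, hΘ, Polynomial.aeval_X, Polynomial.aeval_C,
            Polynomial.algebraMap_eq, ← pow_mul]
      _ = ∑ t ∈ Finset.range (k+1),
            Polynomial.C (a (k - (k - t))) * Polynomial.X ^ (p * (k - t)) := by
          have := Finset.sum_range_reflect
            (fun s => Polynomial.C (a (k - s)) * Polynomial.X ^ (p * s)) (k + 1)
          simpa using this.symm
      _ = ∑ t ∈ Finset.range (k+1), Polynomial.C (a t) * Polynomial.X ^ (p * (k - t)) := by
          refine Finset.sum_congr rfl fun t ht => ?_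
          rw [Nat.sub_sub_self (Nat.lt_succ_iff.1 (Finset.mem_range.1 ht))]
  have hΘlin : ∀ r : ℂ, Θ (Polynomial.X - Polynomial.C r) = Polynomial.X ^ p - Polynomial.C r := by
    intro r
    rw [map_sub, hΘ, Polynomial.aeval_X, Polynomial.aeval_C, Polynomial.algebraMap_eq]
  have hΘprod : Θ ((g.roots.map fun r => Polynomial.X - Polynomial.C r).prod)
      = (g.roots.map fun r => Polynomial.X ^ p - Polynomial.C r).prod := by
    rw [map_multiset_prod, Multiset.map_map]
    congr 1
    exact Multiset.map_congr rfl fun r _ => hΘlin r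
  have hΘfin : ∀ (n : ℕ) (w : Fin n → ℂ),
      Θ (∏ i, (Polynomial.X - Polynomial.C (w i)))
        = ∏ i, (Polynomial.X ^ p - Polynomial.C (w i)) := by
    intro n w
    rw [map_prod]
    exact Finset.prod_congr rfl fun i _ => hΘlin (w i)
  -- ev computations
  have hevP : ev P = Θ g := by
    conv_lhs => rw [shape_sum p q k hq P hshape]
    rw [map_sum, hΘg]
    exact Finset.sum_congr rfl fun t ht => by rw [monomial_Ee, ev_CXX]
  have hevprod : ∀ (n : ℕ) (w : Fin n → ℂ),
      ev (∏ i, (X 1 ^ p - C (w i) * X 0 ^ q))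
        = ∏ i, (Polynomial.X ^ p - Polynomial.C (w i)) := by
    intro n w
    rw [map_prod]
    exact Finset.prod_congr rfl fun i _ => ev_factor p q (w i)
  have hprodl : (∏ i, (Polynomial.X ^ p - Polynomial.C (l i)))
      = (g.roots.map fun r => Polynomial.X ^ p - Polynomial.C r).prod := by
    rw [Finset.prod_eq_multiset_prod, ← hμ, Multiset.map_map]
    rfl
  have hfact : P = ∏ i, (X 1 ^ p - C (l i) * X 0 ^ q) := by
    apply ev_inj p q k hp hq _ _ hshape (prod_shape p q k l)
    rw [hevP, hevprod, hprodl, ← hΘprod, ← hgprod]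
  refine ⟨k, l, hlne, hfact, ?_⟩
  intro k' l' hl'ne heq
  have h1 : Θ g = ∏ i : Fin k', (Polynomial.X ^ p - Polynomial.C (l' i)) := by
    rw [← hevP, heq, hevprod]
  have h2 : Θ g = Θ (∏ i : Fin k', (Polynomial.X - Polynomial.C (l' i))) := by
    rw [h1, hΘfin]
  have h3 : g = ∏ i : Fin k', (Polynomial.X - Polynomial.C (l' i)) := theta_inj p hp h2
  have h4 : g.roots = Finset.univ.val.map l' := by
    rw [h3, Finset.prod_eq_multiset_prod]
    have hmm : Finset.univ.val.map (fun i => Polynomial.X - Polynomial.C (l' i))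
        = (Finset.univ.val.map l').map (fun r => Polynomial.X - Polynomial.C r) := by
      rw [Multiset.map_map]
      rfl
    rw [hmm, Polynomial.roots_multiset_prod_X_sub_C]
  have h5 : (List.ofFn l).Perm (List.ofFn l') := by
    rw [← Multiset.coe_eq_coe]
    calc (List.ofFn l : Multiset ℂ) = Finset.univ.val.map l := (Fin.univ_val_map l).symm
      _ = g.roots := hμ
      _ = Finset.univ.val.map l' := h4
      _ = (List.ofFn l' : Multiset ℂ) := Fin.univ_val_map l'
  exact ofFn_perm_equiv h5
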